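/- arXiv:0805.4144 — 2 statements merged into one kernel-verified Lean document; each statement's English description precedes it below -/
import Mathlib

section
/- Let f₁, …, fₙ : ℝⁿ → ℝ be Lipschitz and suppose the support of f₁ (or of the whole product expression) is compact. Then ∫_{ℝⁿ} det(∂fᵢ/∂xⱼ) dx = 0 provided f₁ has compact support. -/
open MeasureTheory

open Filter Metric Function ContinuousLinearMap
open scoped Topology NNReal Convolution Pointwise

section LemA
variable {E : Type*} [NormedAddCommGroup E] [NormedSpace ℝ E]
  [MeasurableSpace E] [BorelSpace E] [FiniteDimensional ℝ E]
  (μ : Measure E) [μ.IsAddHaarMeasure]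

theorem integral_fderiv_apply_eq_zero {u : E → ℝ} (hu : ContDiff ℝ 1 u)
    (hsupp : HasCompactSupport u) (v : E) :
    ∫ x, fderiv ℝ u x v ∂μ = 0 := by
  classical
  obtain ⟨C, hC⟩ : ∃ C : ℝ, ∀ x, ‖fderiv ℝ u x‖ ≤ C := by
    obtain ⟨C, hC⟩ := ((hu.continuous_fderiv one_ne_zero).norm).bddAbove_range_of_hasCompactSupport
      (hsupp.fderiv ℝ).norm
    exact ⟨C, fun x => hC ⟨x, rfl⟩⟩
  have hC0 : 0 ≤ C := le_trans (norm_nonneg _) (hC 0)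
  have hlip : LipschitzWith (⟨C, hC0⟩ : ℝ≥0) u :=
    lipschitzWith_of_nnnorm_fderiv_le (hu.differentiable one_ne_zero) fun x => hC x
  set K : Set E := tsupport u + closedBall (0:E) ‖v‖ with hK
  have hKc : IsCompact K := IsCompact.add hsupp (isCompact_closedBall (0:E) ‖v‖)
  have hint : Integrable u μ := hu.continuous.integrable_of_hasCompactSupport hsupp
  set F : ℝ → E → ℝ := fun h x => (u (x + h • v) - u x) / h with hF
  have key : Tendsto (fun h => ∫ x, F h x ∂μ) (𝓝[≠] (0:ℝ)) (𝓝 (∫ x, fderiv ℝ u x v ∂μ)) := by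
    apply tendsto_integral_filter_of_dominated_convergence
      (Set.indicator K fun _ => C * ‖v‖)
    · filter_upwards with h
      exact ((hu.continuous.comp (continuous_id.add continuous_const)).sub
        hu.continuous).div_const h |>.aestronglyMeasurable
    · have : ∀ᶠ (h : ℝ) in 𝓝[≠] (0:ℝ), |h| ≤ 1 := by
        apply eventually_nhdsWithin_of_eventually_nhds
        have := Metric.ball_mem_nhds (0:ℝ) one_pos
        filter_upwards [this] with h hh
        rw [mem_ball, Real.dist_eq, sub_zero] at hh
        exact le_of_lt hh
      filter_upwards [this] with h hh1
      filter_upwards with x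
      by_cases hx : x ∈ K
      · rw [Set.indicator_of_mem hx]
        rcases eq_or_ne h 0 with rfl | hh0
        · simp only [hF, div_zero, norm_zero]
          positivity
        · have := hlip.dist_le_mul (x + h • v) x
          simp only [dist_eq_norm, add_sub_cancel_left] at this
          rw [hF]
          simp only [norm_div, Real.norm_eq_abs]
          rw [div_le_iff₀ (abs_pos.2 hh0)]
          calc |u (x + h • v) - u x| ≤ C * ‖h • v‖ := this
            _ = C * ‖v‖ * |h| := by rw [norm_smul, Real.norm_eq_abs]; ring
      · rw [Set.indicator_of_notMem hx]
        have h1 : u x = 0 := by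
          by_contra hne
          have h0 : (0:E) ∈ closedBall (0:E) ‖v‖ := by simp
          have := Set.add_mem_add (subset_tsupport u hne) h0
          rw [add_zero] at this
          exact hx this
        have h2 : u (x + h • v) = 0 := by
          by_contra hne
          have hb : -(h • v) ∈ closedBall (0:E) ‖v‖ := by
            simp only [mem_closedBall, dist_zero_right, norm_neg, norm_smul, Real.norm_eq_abs]
            calc |h| * ‖v‖ ≤ 1 * ‖v‖ := mul_le_mul_of_nonneg_right hh1 (norm_nonneg v)
              _ = ‖v‖ := one_mul _
          have := Set.add_mem_add (subset_tsupport u hne) hb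
          rw [add_neg_cancel_right] at this
          exact hx this
        simp [hF, h1, h2]
    · rw [integrable_indicator_iff hKc.measurableSet]
      exact integrableOn_const hKc.measure_lt_top.ne
    · filter_upwards with x
      have hx : HasDerivAt (fun t : ℝ => u (x + t • v)) (fderiv ℝ u x v) 0 := by
        have hline : HasDerivAt (fun t : ℝ => x + t • v) v 0 := by
          simpa using ((hasDerivAt_id (0:ℝ)).smul_const v).const_add x
        have hfd : HasFDerivAt u (fderiv ℝ u x) (x + (0:ℝ) • v) := by
          simpa using (hu.differentiable one_ne_zero x).hasFDerivAt
        exact hfd.comp_hasDerivAt 0 hline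
      have := hasDerivAt_iff_tendsto_slope.1 hx
      apply this.congr
      intro h
      simp [slope, hF, sub_zero, div_eq_inv_mul]
  have hzero : ∀ᶠ h in 𝓝[≠] (0:ℝ), ∫ x, F h x ∂μ = 0 := by
    filter_upwards [self_mem_nhdsWithin] with h (hh : h ≠ 0)
    have hshift : Integrable (fun x => u (x + h • v)) μ := by
      simpa using hint.comp_add_right (h • v)
    rw [hF]
    simp only [div_eq_inv_mul]
    rw [integral_const_mul, integral_sub hshift hint,
      integral_add_right_eq_self u (h • v), sub_self, mul_zero]
  have h2 : Tendsto (fun _ : ℝ => (0:ℝ)) (𝓝[≠] (0:ℝ)) (𝓝 (∫ x, fderiv ℝ u x v ∂μ)) :=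
    key.congr' (hzero.mono fun h hh => by simpa using hh)
  exact tendsto_nhds_unique h2 tendsto_const_nhds

end LemA

section Helpers
variable {E : Type*} [NormedAddCommGroup E] [NormedSpace ℝ E]

/-- Bound on `fderiv` applied to a vector, for a Lipschitz function. -/
theorem LipschitzWith.norm_fderiv_apply_le {f : E → ℝ} {L : ℝ≥0}
    (hf : LipschitzWith L f) (x v : E) : ‖fderiv ℝ f x v‖ ≤ L * ‖v‖ := by
  by_cases hd : DifferentiableAt ℝ f x
  · calc ‖fderiv ℝ f x v‖ ≤ ‖fderiv ℝ f x‖ * ‖v‖ := (fderiv ℝ f x).le_opNorm v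
      _ ≤ L * ‖v‖ := by
        gcongr
        exact norm_fderiv_le_of_lipschitz ℝ hf
  · rw [fderiv_zero_of_not_differentiableAt hd]
    simp only [ContinuousLinearMap.zero_apply, norm_zero]
    positivity

theorem locallyIntegrable_of_bounded {E : Type*} [NormedAddCommGroup E] [NormedSpace ℝ E]
    [MeasurableSpace E] [BorelSpace E] [FiniteDimensional ℝ E] {μ : Measure E}
    [μ.IsAddHaarMeasure] {f : E → ℝ} {C : ℝ} (hmeas : AEStronglyMeasurable f μ)
    (hbound : ∀ x, ‖f x‖ ≤ C) : LocallyIntegrable f μ := by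
  intro x
  refine ⟨closedBall x 1, closedBall_mem_nhds x one_pos, ?_⟩
  refine Integrable.mono' (g := fun _ => C) ?_ hmeas.restrict (ae_of_all _ hbound)
  exact integrableOn_const (measure_closedBall_lt_top).ne

end Helpers

section LemC
variable {E : Type*} [NormedAddCommGroup E] [InnerProductSpace ℝ E]
  [MeasurableSpace E] [BorelSpace E] [FiniteDimensional ℝ E]
  (μ : Measure E) [μ.IsAddHaarMeasure]

/-- derivative of a bump-convolution of a Lipschitz function equals the convolution with the
(a.e. defined) derivative. -/
theorem fderiv_bump_convolution_apply {f : E → ℝ} {L : ℝ≥0} (hf : LipschitzWith L f)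
    (φ : ContDiffBump (0 : E)) (x v : E) :
    fderiv ℝ (φ.normed μ ⋆[lsmul ℝ ℝ, μ] f) x v
      = ∫ t, φ.normed μ t * fderiv ℝ f (x - t) v ∂μ := by
  classical
  set ρ := φ.normed μ with hρ
  have hρc : Continuous ρ := φ.continuous_normed
  have hρsupp : HasCompactSupport ρ := φ.hasCompactSupport_normed
  have hρint : Integrable ρ μ := hρc.integrable_of_hasCompactSupport hρsupp
  set G := ρ ⋆[lsmul ℝ ℝ, μ] f with hG
  have hGsmooth : ContDiff ℝ 1 G :=
    hρsupp.contDiff_convolution_left _ (φ.contDiff_normed (n := 1)) hf.continuous.locallyIntegrable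
  -- each convolution integrand is integrable
  have hint : ∀ z : E, Integrable (fun t => ρ t * f (z - t)) μ := by
    intro z
    apply Continuous.integrable_of_hasCompactSupport
    · exact hρc.mul (hf.continuous.comp (continuous_const.sub continuous_id))
    · exact hρsupp.mul_right
  have hGdef : ∀ z : E, G z = ∫ t, ρ t * f (z - t) ∂μ := fun z => by
    rw [hG, convolution_def]; simp [lsmul_apply]
  -- the slope of G at x in direction v
  have hx : HasDerivAt (fun s : ℝ => G (x + s • v)) (fderiv ℝ G x v) 0 := by
    have hline : HasDerivAt (fun s : ℝ => x + s • v) v 0 := by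
      simpa using ((hasDerivAt_id (0:ℝ)).smul_const v).const_add x
    have hfd : HasFDerivAt G (fderiv ℝ G x) (x + (0:ℝ) • v) := by
      simpa using (hGsmooth.differentiable one_ne_zero x).hasFDerivAt
    exact hfd.comp_hasDerivAt 0 hline
  have hslope := hasDerivAt_iff_tendsto_slope.1 hx
  -- rewrite the slope as an integral
  have hslope_eq : ∀ s : ℝ, s ≠ 0 → slope (fun s : ℝ => G (x + s • v)) 0 s
      = ∫ t, ρ t * ((f (x - t + s • v) - f (x - t)) / s) ∂μ := by
    intro s hs
    rw [slope_def_field]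
    simp only [zero_smul, add_zero, sub_zero]
    rw [hGdef, hGdef]
    rw [← integral_sub (hint (x + s • v)) (hint x)]
    rw [div_eq_inv_mul, ← integral_const_mul]
    congr 1
    funext t
    have h2 : x + s • v - t = x - t + s • v := by abel
    rw [h2]
    field_simp
  -- DCT
  have key : Tendsto (fun s : ℝ => ∫ t, ρ t * ((f (x - t + s • v) - f (x - t)) / s) ∂μ)
      (𝓝[≠] (0:ℝ)) (𝓝 (∫ t, ρ t * fderiv ℝ f (x - t) v ∂μ)) := by
    apply tendsto_integral_filter_of_dominated_convergence (fun t => ρ t * (L * ‖v‖))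
    · filter_upwards [self_mem_nhdsWithin] with s (hs : s ≠ 0)
      apply Continuous.aestronglyMeasurable
      exact hρc.mul (((hf.continuous.comp ((continuous_const.sub continuous_id).add
        continuous_const)).sub (hf.continuous.comp
        (continuous_const.sub continuous_id))).div_const s)
    · filter_upwards [self_mem_nhdsWithin] with s (hs : s ≠ 0)
      filter_upwards with t
      rw [norm_mul]
      have h1 : ‖ρ t‖ = ρ t := Real.norm_of_nonneg (φ.nonneg_normed t)
      rw [h1]
      apply mul_le_mul_of_nonneg_left _ (φ.nonneg_normed t)
      have := hf.dist_le_mul (x - t + s • v) (x - t)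
      simp only [dist_eq_norm, add_sub_cancel_left] at this
      rw [norm_div, Real.norm_eq_abs s, div_le_iff₀ (abs_pos.2 hs)]
      calc ‖f (x - t + s • v) - f (x - t)‖ ≤ L * ‖s • v‖ := by
            simpa [Real.dist_eq, dist_eq_norm] using this
        _ = L * ‖v‖ * |s| := by rw [norm_smul, Real.norm_eq_abs]; ring
    · exact hρint.mul_const _
    · have hae : ∀ᵐ t ∂μ, DifferentiableAt ℝ f (x - t) := by
        have h0 : ∀ᵐ y ∂μ, DifferentiableAt ℝ f y := hf.ae_differentiableAt
        rw [← Measure.map_sub_left_ae μ x] at h0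
        exact eventually_map.1 h0
      filter_upwards [hae] with t ht
      apply Tendsto.const_mul
      have hd : HasDerivAt (fun s : ℝ => f ((x - t) + s • v)) (fderiv ℝ f (x - t) v) 0 := by
        have hline : HasDerivAt (fun s : ℝ => (x - t) + s • v) v 0 := by
          simpa using ((hasDerivAt_id (0:ℝ)).smul_const v).const_add (x - t)
        have hfd : HasFDerivAt f (fderiv ℝ f (x - t)) ((x - t) + (0:ℝ) • v) := by
          simpa using ht.hasFDerivAt
        exact hfd.comp_hasDerivAt 0 hline
      have := hasDerivAt_iff_tendsto_slope.1 hd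
      apply this.congr'
      filter_upwards [self_mem_nhdsWithin] with s (hs : s ≠ 0)
      rw [slope_def_field]
      simp only [zero_smul, add_zero, sub_zero]
  have hev : slope (fun s : ℝ => G (x + s • v)) 0
      =ᶠ[𝓝[≠] (0:ℝ)] fun s => ∫ t, ρ t * ((f (x - t + s • v) - f (x - t)) / s) ∂μ := by
    filter_upwards [self_mem_nhdsWithin] with s (hs : s ≠ 0)
    exact hslope_eq s hs
  exact tendsto_nhds_unique (hslope.congr' hev) key

theorem norm_fderiv_bump_convolution_apply_le {f : E → ℝ} {L : ℝ≥0} (hf : LipschitzWith L f)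
    (φ : ContDiffBump (0 : E)) (x v : E) :
    ‖fderiv ℝ (φ.normed μ ⋆[lsmul ℝ ℝ, μ] f) x v‖ ≤ L * ‖v‖ := by
  rw [fderiv_bump_convolution_apply μ hf φ x v]
  have hρc : Continuous (φ.normed μ) := φ.continuous_normed
  have hρint : Integrable (φ.normed μ) μ :=
    hρc.integrable_of_hasCompactSupport φ.hasCompactSupport_normed
  calc ‖∫ t, φ.normed μ t * fderiv ℝ f (x - t) v ∂μ‖
      ≤ ∫ t, φ.normed μ t * (L * ‖v‖) ∂μ := by
        apply norm_integral_le_of_norm_le (hρint.mul_const _)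
        filter_upwards with t
        rw [norm_mul, Real.norm_of_nonneg (φ.nonneg_normed t)]
        exact mul_le_mul_of_nonneg_left (hf.norm_fderiv_apply_le _ _) (φ.nonneg_normed t)
    _ = L * ‖v‖ := by rw [integral_mul_const, φ.integral_normed, one_mul]

end LemC

theorem contDiff_finset_prod' {ι : Type*} {m : WithTop ℕ∞} {E' : Type*} [NormedAddCommGroup E']
    [NormedSpace ℝ E'] (s : Finset ι) {F : ι → E' → ℝ} :
    (∀ i ∈ s, ContDiff ℝ m (F i)) → ContDiff ℝ m (fun x => ∏ i ∈ s, F i x) := by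
  classical
  refine Finset.cons_induction_on s (fun _ => by simpa using contDiff_const) ?_
  intro a s ha ih h
  simp only [Finset.prod_cons]
  exact (h a (Finset.mem_cons_self a s)).mul (ih fun i hi => h i (Finset.mem_cons.2 (Or.inr hi)))

section SmoothCase

variable {n : ℕ} [NeZero n]

set_option maxHeartbeats 1000000 in
theorem integral_det_fderiv_smooth (g : Fin n → EuclideanSpace ℝ (Fin n) → ℝ)
    (hg : ∀ i, ContDiff ℝ 2 (g i)) (hsupp : HasCompactSupport (g 0)) :
    ∫ x : EuclideanSpace ℝ (Fin n), Matrix.det (Matrix.of fun i j : Fin n =>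
        fderiv ℝ (g i) x (EuclideanSpace.single j 1)) = 0 := by
  classical
  set e : Fin n → EuclideanSpace ℝ (Fin n) := fun j => EuclideanSpace.single j 1 with he
  have hgd : ∀ i, Differentiable ℝ (g i) := fun i => (hg i).differentiable two_ne_zero
  have hfd1 : ∀ i, ContDiff ℝ 1 (fderiv ℝ (g i)) := fun i => (hg i).fderiv_right (by norm_num)
  have hPc : ∀ (i : Fin n) (w : EuclideanSpace ℝ (Fin n)), Continuous fun x => fderiv ℝ (g i) x w := fun i w =>
    ((hfd1 i).continuous).clm_apply continuous_const
  have hP2c : ∀ (k : Fin n) (w w' : EuclideanSpace ℝ (Fin n)),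
      Continuous fun x => fderiv ℝ (fderiv ℝ (g k)) x w w' := fun k w w' =>
    ((((hfd1 k).continuous_fderiv one_ne_zero).clm_apply continuous_const).clm_apply continuous_const)
  have hP0 : ∀ w : EuclideanSpace ℝ (Fin n), HasCompactSupport fun x => fderiv ℝ (g 0) x w := fun w => by
    have := (hsupp.fderiv ℝ).comp_left (g := fun A : EuclideanSpace ℝ (Fin n) →L[ℝ] ℝ => A w) rfl
    exact this
  have hPd : ∀ (i : Fin n) (w : EuclideanSpace ℝ (Fin n)) (x : EuclideanSpace ℝ (Fin n)), HasFDerivAt (fun y => fderiv ℝ (g i) y w)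
      ((ContinuousLinearMap.apply ℝ ℝ w).comp (fderiv ℝ (fderiv ℝ (g i)) x)) x := fun i w x =>
    (ContinuousLinearMap.apply ℝ ℝ w).hasFDerivAt.comp x
      (((hfd1 i).differentiable one_ne_zero) x).hasFDerivAt
  have hdet : ∀ x, Matrix.det (Matrix.of fun i j : Fin n => fderiv ℝ (g i) x (e j))
      = ∑ σ : Equiv.Perm (Fin n),
          ((Equiv.Perm.sign σ : ℤ) : ℝ) * ∏ i, fderiv ℝ (g i) x (e (σ i)) := by
    intro x
    rw [← Matrix.det_transpose, Matrix.det_apply']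
    rfl
  have hint_p : ∀ σ : Equiv.Perm (Fin n),
      Integrable (fun x => ∏ i, fderiv ℝ (g i) x (e (σ i))) := by
    intro σ
    apply Continuous.integrable_of_hasCompactSupport
    · exact continuous_finset_prod _ fun i _ => hPc i (e (σ i))
    · have hrw : (fun x => ∏ i, fderiv ℝ (g i) x (e (σ i)))
          = fun x => fderiv ℝ (g 0) x (e (σ 0)) *
              ∏ i ∈ Finset.univ.erase 0, fderiv ℝ (g i) x (e (σ i)) := by
        funext x
        exact (Finset.mul_prod_erase Finset.univ
          (fun i => fderiv ℝ (g i) x (e (σ i))) (Finset.mem_univ (0 : Fin n))).symm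
      rw [hrw]
      exact (hP0 (e (σ 0))).mul_right
  set s : Finset (Fin n) := Finset.univ.erase 0 with hs
  set T : Equiv.Perm (Fin n) → Fin n → ℝ := fun σ k => ∫ x, g 0 x *
      ((∏ i ∈ s.erase k, fderiv ℝ (g i) x (e (σ i))) *
        fderiv ℝ (fderiv ℝ (g k)) x (e (σ 0)) (e (σ k))) with hT
  have hint_term : ∀ (σ : Equiv.Perm (Fin n)) (k : Fin n), Integrable (fun x => g 0 x *
      ((∏ i ∈ s.erase k, fderiv ℝ (g i) x (e (σ i))) *
        fderiv ℝ (fderiv ℝ (g k)) x (e (σ 0)) (e (σ k)))) := by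
    intro σ k
    apply Continuous.integrable_of_hasCompactSupport
    · exact (hg 0).continuous.mul ((continuous_finset_prod (s.erase k)
        (fun i _ => hPc i (e (σ i)))).mul (hP2c k (e (σ 0)) (e (σ k))))
    · exact hsupp.mul_right
  have keyσ : ∀ σ : Equiv.Perm (Fin n),
      ∫ x, ∏ i, fderiv ℝ (g i) x (e (σ i)) = - ∑ k ∈ s, T σ k := by
    intro σ
    set u : EuclideanSpace ℝ (Fin n) → ℝ := fun x => g 0 x * ∏ i ∈ s, fderiv ℝ (g i) x (e (σ i)) with hu
    have hu1 : ContDiff ℝ 1 u := ((hg 0).of_le one_le_two).mul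
      (contDiff_finset_prod' s fun i _ => (hfd1 i).clm_apply contDiff_const)
    have husupp : HasCompactSupport u := hsupp.mul_right
    have hderiv : ∀ x, fderiv ℝ u x (e (σ 0)) = (∏ i, fderiv ℝ (g i) x (e (σ i)))
        + ∑ k ∈ s, g 0 x * ((∏ i ∈ s.erase k, fderiv ℝ (g i) x (e (σ i))) *
            fderiv ℝ (fderiv ℝ (g k)) x (e (σ 0)) (e (σ k))) := by
      intro x
      have hprod : HasFDerivAt (fun x => ∏ i ∈ s, fderiv ℝ (g i) x (e (σ i)))
          (∑ k ∈ s, (∏ i ∈ s.erase k, fderiv ℝ (g i) x (e (σ i))) •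
            ((ContinuousLinearMap.apply ℝ ℝ (e (σ k))).comp
              (fderiv ℝ (fderiv ℝ (g k)) x))) x :=
        HasFDerivAt.finset_prod fun k _ => hPd k (e (σ k)) x
      have hmul := ((hgd 0) x).hasFDerivAt.mul hprod
      rw [show fderiv ℝ u x = _ from hmul.fderiv]
      simp only [ContinuousLinearMap.add_apply, ContinuousLinearMap.smul_apply,
        ContinuousLinearMap.coe_sum', Finset.sum_apply, ContinuousLinearMap.coe_comp',
        Function.comp_apply, ContinuousLinearMap.apply_apply, smul_eq_mul]
      rw [Finset.mul_sum, ← Finset.mul_prod_erase Finset.univ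
        (fun i => fderiv ℝ (g i) x (e (σ i))) (Finset.mem_univ (0 : Fin n))]
      ring
    have h0 := integral_fderiv_apply_eq_zero volume hu1 husupp (e (σ 0))
    have hsplit : ∫ (x : EuclideanSpace ℝ (Fin n)), fderiv ℝ u x (e (σ 0))
        = (∫ x, ∏ i, fderiv ℝ (g i) x (e (σ i))) + ∑ k ∈ s, T σ k := by
      rw [integral_congr_ae (ae_of_all _ hderiv)]
      rw [integral_add (hint_p σ) (integrable_finset_sum s fun k _ => hint_term σ k)]
      rw [integral_finset_sum s fun k _ => hint_term σ k]
    rw [hsplit] at h0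
    linarith
  have h3 : ∀ k ∈ s, (∑ σ : Equiv.Perm (Fin n), ((Equiv.Perm.sign σ : ℤ) : ℝ) * T σ k) = 0 := by
    intro k hk
    have hk0 : k ≠ 0 := Finset.ne_of_mem_erase hk
    set τ := Equiv.swap (0 : Fin n) k with hτ
    have hre : (∑ σ : Equiv.Perm (Fin n), ((Equiv.Perm.sign σ : ℤ) : ℝ) * T σ k)
        = ∑ σ : Equiv.Perm (Fin n), ((Equiv.Perm.sign (σ * τ) : ℤ) : ℝ) * T (σ * τ) k :=
      (Fintype.sum_equiv (Equiv.mulRight τ)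
        (fun σ => ((Equiv.Perm.sign (σ * τ) : ℤ) : ℝ) * T (σ * τ) k)
        (fun σ => ((Equiv.Perm.sign σ : ℤ) : ℝ) * T σ k) (fun σ => rfl)).symm
    have hTτ : ∀ σ : Equiv.Perm (Fin n), T (σ * τ) k = T σ k := by
      intro σ
      rw [hT]
      apply integral_congr_ae
      filter_upwards with x
      have hpr : (∏ i ∈ s.erase k, fderiv ℝ (g i) x (e ((σ * τ) i)))
          = ∏ i ∈ s.erase k, fderiv ℝ (g i) x (e (σ i)) := by
        apply Finset.prod_congr rfl
        intro i hi
        have hi1 : i ≠ k := Finset.ne_of_mem_erase hi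
        have hi2 : i ≠ 0 := Finset.ne_of_mem_erase (Finset.mem_of_mem_erase hi)
        rw [Equiv.Perm.mul_apply, hτ, Equiv.swap_apply_of_ne_of_ne hi2 hi1]
      have h00 : (σ * τ) 0 = σ k := by rw [Equiv.Perm.mul_apply, hτ, Equiv.swap_apply_left]
      have hkk : (σ * τ) k = σ 0 := by rw [Equiv.Perm.mul_apply, hτ, Equiv.swap_apply_right]
      rw [hpr, h00, hkk]
      have hsym := (((hg k).contDiffAt (x := x)).isSymmSndFDerivAt (by simp)).eq (e (σ k)) (e (σ 0))
      rw [hsym]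
    have hsgn : ∀ σ : Equiv.Perm (Fin n),
        ((Equiv.Perm.sign (σ * τ) : ℤ) : ℝ) = -((Equiv.Perm.sign σ : ℤ) : ℝ) := by
      intro σ
      rw [Equiv.Perm.sign_mul, hτ, Equiv.Perm.sign_swap (Ne.symm hk0)]
      push_cast
      ring
    have hre2 : (∑ σ : Equiv.Perm (Fin n), ((Equiv.Perm.sign (σ * τ) : ℤ) : ℝ) * T (σ * τ) k)
        = ∑ σ : Equiv.Perm (Fin n), -(((Equiv.Perm.sign σ : ℤ) : ℝ) * T σ k) :=
      Finset.sum_congr rfl fun σ _ => by rw [hTτ σ, hsgn σ]; ring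
    have hSS : (∑ σ : Equiv.Perm (Fin n), ((Equiv.Perm.sign σ : ℤ) : ℝ) * T σ k)
        = - ∑ σ : Equiv.Perm (Fin n), ((Equiv.Perm.sign σ : ℤ) : ℝ) * T σ k :=
      hre.trans (hre2.trans (Finset.sum_neg_distrib _))
    linarith
  calc ∫ x : EuclideanSpace ℝ (Fin n), Matrix.det (Matrix.of fun i j : Fin n => fderiv ℝ (g i) x (e j))
      = ∑ σ : Equiv.Perm (Fin n), ((Equiv.Perm.sign σ : ℤ) : ℝ)
          * ∫ x, ∏ i, fderiv ℝ (g i) x (e (σ i)) := by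
        rw [integral_congr_ae (ae_of_all _ hdet)]
        rw [integral_finset_sum _ (fun σ _ => (hint_p σ).const_mul _)]
        exact Finset.sum_congr rfl fun σ _ => integral_const_mul _ _
    _ = ∑ σ : Equiv.Perm (Fin n), ((Equiv.Perm.sign σ : ℤ) : ℝ) * (- ∑ k ∈ s, T σ k) := by
        exact Finset.sum_congr rfl fun σ _ => by rw [keyσ σ]
    _ = ∑ σ : Equiv.Perm (Fin n), ∑ k ∈ s, -(((Equiv.Perm.sign σ : ℤ) : ℝ) * T σ k) :=
        Finset.sum_congr rfl fun σ _ => by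
          rw [mul_neg, Finset.mul_sum, Finset.sum_neg_distrib]
    _ = ∑ k ∈ s, ∑ σ : Equiv.Perm (Fin n), -(((Equiv.Perm.sign σ : ℤ) : ℝ) * T σ k) :=
        Finset.sum_comm
    _ = - ∑ k ∈ s, ∑ σ : Equiv.Perm (Fin n), ((Equiv.Perm.sign σ : ℤ) : ℝ) * T σ k := by
        rw [← Finset.sum_neg_distrib]
        exact Finset.sum_congr rfl fun k _ => by rw [Finset.sum_neg_distrib]
    _ = 0 := by
        rw [Finset.sum_eq_zero h3, neg_zero]

theorem abs_det_le_of_entries {N : ℕ} (M : Matrix (Fin N) (Fin N) ℝ) (C : Fin N → ℝ)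
    (h : ∀ i j, |M i j| ≤ C i) : |M.det| ≤ (N.factorial : ℝ) * ∏ i, C i := by
  rw [Matrix.det_apply']
  calc |∑ σ : Equiv.Perm (Fin N), ((Equiv.Perm.sign σ : ℤ):ℝ) * ∏ i, M (σ i) i|
      ≤ ∑ σ : Equiv.Perm (Fin N), |((Equiv.Perm.sign σ : ℤ):ℝ) * ∏ i, M (σ i) i| :=
        Finset.abs_sum_le_sum_abs _ _
    _ ≤ ∑ _σ : Equiv.Perm (Fin N), ∏ i, C i := by
        apply Finset.sum_le_sum
        intro σ _
        rw [abs_mul]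
        have h1 : |((Equiv.Perm.sign σ : ℤ):ℝ)| = 1 := by
          rcases Int.units_eq_one_or (Equiv.Perm.sign σ) with h' | h' <;> simp [h']
        rw [h1, one_mul, Finset.abs_prod]
        calc ∏ i, |M (σ i) i| ≤ ∏ i, C (σ i) :=
              Finset.prod_le_prod (fun i _ => abs_nonneg _) (fun i _ => h (σ i) i)
          _ = ∏ i, C i := Equiv.prod_comp σ C
    _ = (N.factorial : ℝ) * ∏ i, C i := by
        rw [Finset.sum_const, Finset.card_univ, Fintype.card_perm, Fintype.card_fin,
          nsmul_eq_mul]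

set_option maxHeartbeats 1000000 in
/-- Coordinate form of `∫ df₁ ∧ ⋯ ∧ dfₙ = 0`: if `f₁, …, fₙ : ℝⁿ → ℝ` are
Lipschitz and `f₁` has compact support, then the integral over `ℝⁿ` of the
a.e. defined Jacobian determinant `det(∂fᵢ/∂xⱼ)` vanishes. -/
theorem stmt_11 {n : ℕ} [NeZero n] (f : Fin n → EuclideanSpace ℝ (Fin n) → ℝ)
    (L : Fin n → NNReal) (hf : ∀ i, LipschitzWith (L i) (f i))
    (hsupp : HasCompactSupport (f 0)) :
    ∫ x, Matrix.det (Matrix.of fun i j : Fin n =>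
        fderiv ℝ (f i) x (EuclideanSpace.single j 1)) = 0 := by
  classical
  set e : Fin n → EuclideanSpace ℝ (Fin n) := fun j => EuclideanSpace.single j 1 with he
  have he1 : ∀ j, ‖e j‖ = 1 := fun j => by
    rw [he]; simp [EuclideanSpace.norm_single]
  -- bump family
  set φ : ℕ → ContDiffBump (0 : EuclideanSpace ℝ (Fin n)) := fun k =>
    ⟨(k+2:ℝ)⁻¹, 2*(k+2:ℝ)⁻¹, by positivity, lt_two_mul_self (by positivity)⟩ with hφ
  set g : ℕ → Fin n → EuclideanSpace ℝ (Fin n) → ℝ := fun k i =>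
    (φ k).normed volume ⋆[lsmul ℝ ℝ, volume] f i with hg
  have hg2 : ∀ k i, ContDiff ℝ 2 (g k i) := by
    intro k i
    have : ContDiff ℝ ((2:ℕ∞) : WithTop ℕ∞) (g k i) :=
      (φ k).hasCompactSupport_normed.contDiff_convolution_left (μ := volume) (lsmul ℝ ℝ)
        ((φ k).contDiff_normed (n := 2)) (hf i).continuous.locallyIntegrable
    have h2 : ((2:ℕ∞) : WithTop ℕ∞) = (2 : WithTop ℕ∞) := by norm_cast
    rw [h2] at this
    exact this
  have hgs : ∀ k, HasCompactSupport (g k 0) := fun k =>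
    ((φ k).hasCompactSupport_normed).convolution _ hsupp
  have hzero : ∀ k, ∫ x : EuclideanSpace ℝ (Fin n), Matrix.det (Matrix.of fun i j : Fin n =>
      fderiv ℝ (g k i) x (EuclideanSpace.single j 1)) = 0 := fun k =>
    integral_det_fderiv_smooth (g k) (hg2 k) (hgs k)
  have hconv : ∀ k i x (v : EuclideanSpace ℝ (Fin n)), fderiv ℝ (g k i) x v
      = ∫ t, (φ k).normed volume t * fderiv ℝ (f i) (x - t) v :=
    fun k i x v => fderiv_bump_convolution_apply volume (hf i) (φ k) x v
  have hbnd : ∀ k i x j, |fderiv ℝ (g k i) x (e j)| ≤ (L i : ℝ) := by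
    intro k i x j
    have := norm_fderiv_bump_convolution_apply_le volume (hf i) (φ k) x (e j)
    rwa [he1 j, mul_one, Real.norm_eq_abs] at this
  -- the common compact support
  set K0 : Set (EuclideanSpace ℝ (Fin n)) := closedBall 0 1 + tsupport (f 0) with hK0
  have hK0c : IsCompact K0 := (isCompact_closedBall _ _).add hsupp
  have hK0sub : ∀ k, support (g k 0) ⊆ K0 := by
    intro k
    refine (support_convolution_subset _).trans ?_
    apply Set.add_subset_add
    · rw [(φ k).support_normed_eq]
      refine (ball_subset_closedBall).trans (closedBall_subset_closedBall ?_)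
      rw [hφ]
      simp only
      have hpos : (0:ℝ) < (k:ℝ) + 2 := by positivity
      rw [← div_eq_mul_inv, div_le_one hpos]
      linarith [Nat.cast_nonneg (α := ℝ) k]
    · exact subset_tsupport (f 0)
  have hvanish : ∀ k x, x ∉ K0 → Matrix.det (Matrix.of fun i j : Fin n =>
      fderiv ℝ (g k i) x (EuclideanSpace.single j 1)) = 0 := by
    intro k x hx
    have hop : IsOpen K0ᶜ := hK0c.isClosed.isOpen_compl
    have hev : g k 0 =ᶠ[𝓝 x] (fun _ => (0:ℝ)) := by
      filter_upwards [hop.mem_nhds hx] with y hy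
      by_contra hne
      exact hy (hK0sub k (mem_support.2 hne))
    have hfz : fderiv ℝ (g k 0) x = 0 := by
      rw [hev.fderiv_eq]
      exact fderiv_const_apply 0
    apply Matrix.det_eq_zero_of_row_eq_zero 0
    intro j
    simp [Matrix.of_apply, hfz]
  set B : ℝ := (n.factorial : ℝ) * ∏ i, (L i : ℝ) with hB
  set bnd : EuclideanSpace ℝ (Fin n) → ℝ := K0.indicator (fun _ => B) with hbndd
  -- a.e. convergence of the entries
  have haeconv : ∀ᵐ x : EuclideanSpace ℝ (Fin n), ∀ (i j : Fin n),
      Tendsto (fun k => fderiv ℝ (g k i) x (e j)) atTop (𝓝 (fderiv ℝ (f i) x (e j))) := by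
    rw [ae_all_iff]
    intro i
    rw [ae_all_iff]
    intro j
    have hrOut : Tendsto (fun k => (φ k).rOut) atTop (𝓝 0) := by
      rw [hφ]
      simp only
      have h1 : Tendsto (fun k : ℕ => ((k:ℝ)+2)⁻¹) atTop (𝓝 0) := by
        apply Tendsto.inv_tendsto_atTop
        exact tendsto_atTop_add_const_right _ 2 tendsto_natCast_atTop_atTop
      simpa using h1.const_mul 2
    have h'φ : ∀ᶠ k in atTop, (φ k).rOut ≤ 2 * (φ k).rIn := by
      filter_upwards with k
      exact le_of_eq rfl
    have hli : LocallyIntegrable (fun y => fderiv ℝ (f i) y (e j)) volume := by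
      apply locallyIntegrable_of_bounded (C := (L i : ℝ))
      · exact (measurable_fderiv_apply_const ℝ (f i) (e j)).aestronglyMeasurable
      · intro x
        have := LipschitzWith.norm_fderiv_apply_le (hf i) x (e j)
        rwa [he1 j, mul_one] at this
    have := ContDiffBump.ae_convolution_tendsto_right_of_locallyIntegrable
      hrOut h'φ hli
    filter_upwards [this] with x hx
    have hfun : ∀ k, fderiv ℝ (g k i) x (e j)
        = ((φ k).normed volume ⋆[lsmul ℝ ℝ, volume] (fun y => fderiv ℝ (f i) y (e j))) x := by
      intro k
      rw [hconv k i x (e j), convolution_def]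
      simp [lsmul_apply]
    rw [show (fun k => fderiv ℝ (g k i) x (e j)) = fun k =>
      ((φ k).normed volume ⋆[lsmul ℝ ℝ, volume] (fun y => fderiv ℝ (f i) y (e j))) x
      from funext hfun]
    exact hx
  -- dominated convergence
  have hDCT : Tendsto (fun k => ∫ x : EuclideanSpace ℝ (Fin n),
      Matrix.det (Matrix.of fun i j : Fin n => fderiv ℝ (g k i) x (EuclideanSpace.single j 1)))
      atTop (𝓝 (∫ x : EuclideanSpace ℝ (Fin n),
        Matrix.det (Matrix.of fun i j : Fin n => fderiv ℝ (f i) x (EuclideanSpace.single j 1)))) := by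
    apply tendsto_integral_of_dominated_convergence bnd
    · intro k
      apply Continuous.aestronglyMeasurable
      apply Continuous.matrix_det
      apply continuous_matrix
      intro i j
      exact (((hg2 k i).fderiv_right (m := 1) (by norm_num)).continuous).clm_apply continuous_const
    · rw [hbndd]
      rw [integrable_indicator_iff hK0c.measurableSet]
      exact integrableOn_const hK0c.measure_lt_top.ne
    · intro k
      filter_upwards with x
      by_cases hx : x ∈ K0
      · rw [hbndd, Set.indicator_of_mem hx]
        rw [Real.norm_eq_abs]
        exact abs_det_le_of_entries _ (fun i => (L i : ℝ)) (fun i j => hbnd k i x j)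
      · rw [hbndd, Set.indicator_of_notMem hx, hvanish k x hx, norm_zero]
    · filter_upwards [haeconv] with x hx
      have hM : Tendsto (fun k => (Matrix.of fun i j : Fin n =>
          fderiv ℝ (g k i) x (EuclideanSpace.single j 1))) atTop
          (𝓝 (Matrix.of fun i j : Fin n => fderiv ℝ (f i) x (EuclideanSpace.single j 1))) := by
        apply tendsto_pi_nhds.2
        intro i
        apply tendsto_pi_nhds.2
        intro j
        exact hx i j
      exact ((Continuous.matrix_det continuous_id).tendsto _).comp hM
  have hfinal := (tendsto_congr hzero).mp hDCT
  exact tendsto_nhds_unique hfinal tendsto_const_nhds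
end SmoothCase
end

section
/- Let φ : U → V be a C¹-diffeomorphism between open subsets of ℝⁿ and f : V → ℝ Lipschitz. Then f ∘ φ is locally Lipschitz on U, and d(f ∘ φ) = (df ∘ φ) ∘ Dφ almost everywhere on U (chain rule for Lipschitz functions). -/
open MeasureTheory

/-- Chain rule for Lipschitz functions: if `φ : U → V` is a `C¹`
diffeomorphism between open subsets of `ℝⁿ` (with `C¹` inverse `ψ`) and
`f` is Lipschitz on `V`, then `f ∘ φ` is locally Lipschitz on `U` and
`d(f ∘ φ) = (df ∘ φ) ∘ Dφ` almost everywhere on `U`. -/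
theorem stmt_14 {n : ℕ} (U V : Set (EuclideanSpace ℝ (Fin n)))
    (hU : IsOpen U) (hV : IsOpen V)
    (φ ψ : EuclideanSpace ℝ (Fin n) → EuclideanSpace ℝ (Fin n))
    (hφ : ContDiffOn ℝ 1 φ U) (hψ : ContDiffOn ℝ 1 ψ V)
    (hφV : Set.MapsTo φ U V) (hψU : Set.MapsTo ψ V U)
    (hinv₁ : ∀ x ∈ U, ψ (φ x) = x) (hinv₂ : ∀ y ∈ V, φ (ψ y) = y)
    (f : EuclideanSpace ℝ (Fin n) → ℝ)
    (L : NNReal) (hf : LipschitzOnWith L f V) :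
    (∀ x ∈ U, ∃ ε > (0:ℝ), ∃ L' : NNReal,
        LipschitzOnWith L' (f ∘ φ) (Metric.ball x ε ∩ U)) ∧
    ∀ᵐ x : EuclideanSpace ℝ (Fin n), x ∈ U →
      fderiv ℝ (f ∘ φ) x = (fderiv ℝ f (φ x)).comp (fderiv ℝ φ x) := by
  constructor
  · intro x hx
    obtain ⟨K, t, ht, hlip⟩ := (hφ.contDiffAt (hU.mem_nhds hx)).exists_lipschitzOnWith
    obtain ⟨ε, εpos, hε⟩ := Metric.mem_nhds_iff.1 ht
    refine ⟨ε, εpos, L * K, hf.comp (hlip.mono fun y hy => hε hy.1)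
      fun y hy => hφV hy.2⟩
  · -- Rademacher via a Lipschitz extension of f
    obtain ⟨g, hg, hgf⟩ := hf.extend_real
    set B := {y ∈ V | ¬ DifferentiableAt ℝ f y} with hBdef
    have hB : volume B = 0 := by
      have hae := hg.ae_differentiableAt (μ := volume)
      refine measure_mono_null (fun y hy => ?_) (ae_iff.1 hae)
      obtain ⟨hyV, hyn⟩ := hy
      simp only [Set.mem_setOf_eq]
      intro hgy
      exact hyn (((hgf.eventuallyEq_of_mem (hV.mem_nhds hyV)).differentiableAt_iff).2 hgy)
    have hψB : volume (ψ '' B) = 0 :=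
      addHaar_image_eq_zero_of_differentiableOn_of_addHaar_eq_zero volume
        ((hψ.differentiableOn one_ne_zero).mono fun y hy => hy.1) hB
    have : ∀ᵐ x : EuclideanSpace ℝ (Fin n), x ∉ ψ '' B :=
      measure_eq_zero_iff_ae_notMem.1 hψB
    filter_upwards [this] with x hx hxU
    have hφx : φ x ∈ V := hφV hxU
    have hfd : DifferentiableAt ℝ f (φ x) := by
      by_contra h
      exact hx ⟨φ x, ⟨hφx, h⟩, hinv₁ x hxU⟩
    have hφd : DifferentiableAt ℝ φ x :=
      (hφ.differentiableOn one_ne_zero).differentiableAt (hU.mem_nhds hxU)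
    exact fderiv_comp x hfd hφd
end
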